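/- Let T be a t-norm and let R be a fuzzy T-equivalence on a set U with a dually well-ordered spectrum. Then the poset 𝓡𝓢(U,R) = {(μ_{[A]_R}, μ_{[A]^R}) | A ⊆ U}, ordered componentwise and pointwise, is order-isomorphic to the poset RS(U,E) = {(A_E, A^E) | A ⊆ U} of crisp rough sets for the equivalence E, ordered by componentwise inclusion, via the map sending (A_E, A^E) to (μ_{[A]_R}, μ_{[A]^R}). -/
import Mathlib


open unitInterval

noncomputable section

instance : Fact ((0:ℝ) ≤ 1) := ⟨zero_le_one⟩

/-- A t-norm on the unit interval: commutative, associative, monotone in each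
argument, with `1` as unit. -/
def IsTnorm (T : I → I → I) : Prop :=
  (∀ x y, T x y = T y x) ∧
  (∀ x y z, T (T x y) z = T x (T y z)) ∧
  (∀ x₁ x₂ y, x₁ ≤ x₂ → T x₁ y ≤ T x₂ y) ∧
  (∀ x y₁ y₂, y₁ ≤ y₂ → T x y₁ ≤ T x y₂) ∧
  (∀ x, T x 1 = x)

/-- A fuzzy `T`-equivalence: reflexive, symmetric, `T`-transitive fuzzy relation. -/
def IsFuzzyTEquiv {U : Type*} (T : I → I → I) (μ : U → U → I) : Prop :=
  (∀ x, μ x x = 1) ∧ (∀ x y, μ x y = μ y x) ∧ (∀ x y z, T (μ x y) (μ y z) ≤ μ x z)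

/-- Fuzzy upper approximation of a crisp set `A`: `sup {μ x y | y ∈ A}` (`sup ∅ = 0`). -/
def upperApp {U : Type*} (μ : U → U → I) (A : Set U) (x : U) : I := sSup (μ x '' A)

/-- Fuzzy lower approximation of a crisp set `A`: `inf {1 - μ x y | y ∉ A}` (`inf ∅ = 1`). -/
def lowerApp {U : Type*} (μ : U → U → I) (A : Set U) (x : U) : I :=
  sInf ((fun y => σ (μ x y)) '' Aᶜ)

/-- The spectrum of a fuzzy relation. -/
def fuzzySpectrum {U : Type*} (μ : U → U → I) : Set I := {r | ∃ x y, μ x y = r}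

/-- `R` has a dually well-ordered spectrum: every nonempty subset of the
spectrum has a greatest element. -/
def DuallyWellOrdered {U : Type*} (μ : U → U → I) : Prop :=
  ∀ s ⊆ fuzzySpectrum μ, s.Nonempty → ∃ m ∈ s, ∀ r ∈ s, r ≤ m

/-- Upper approximation by the crisp equivalence `E = {(x,y) | μ x y = 1}`. -/
def upperE {U : Type*} (μ : U → U → I) (A : Set U) : Set U :=
  {x | ({y | μ x y = 1} ∩ A).Nonempty}

/-- Lower approximation by the crisp equivalence `E = {(x,y) | μ x y = 1}`. -/
def lowerE {U : Type*} (μ : U → U → I) (A : Set U) : Set U :=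
  {x | {y | μ x y = 1} ⊆ A}

/-- Upper approximation by the support relation `S = {(x,y) | μ x y > 0}`. -/
def upperS {U : Type*} (μ : U → U → I) (A : Set U) : Set U :=
  {x | ({y | 0 < μ x y} ∩ A).Nonempty}

/-- Lower approximation by the support relation `S = {(x,y) | μ x y > 0}`. -/
def lowerS {U : Type*} (μ : U → U → I) (A : Set U) : Set U :=
  {x | {y | 0 < μ x y} ⊆ A}

section helpers

variable {U : Type*} {T : I → I → I} {μ : U → U → I}

lemma symm_anti {a b : I} (h : a ≤ b) : σ b ≤ σ a := by
  simp only [unitInterval.symm, Subtype.mk_le_mk]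
  have : (a : ℝ) ≤ b := h
  linarith

lemma mu_le_of_one (hT : IsTnorm T) (hR : IsFuzzyTEquiv T μ) {x y z : U}
    (h : μ y z = 1) : μ x y ≤ μ x z := by
  have h2 := hR.2.2 x y z
  rwa [h, hT.2.2.2.2] at h2

lemma upApp_mono (hT : IsTnorm T) (hR : IsFuzzyTEquiv T μ) {A B : Set U}
    (h : upperE μ A ⊆ upperE μ B) : upperApp μ A ≤ upperApp μ B := by
  intro x
  apply sSup_le
  rintro r ⟨y, hy, rfl⟩
  have hyA : y ∈ upperE μ A := ⟨y, hR.1 y, hy⟩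
  obtain ⟨z, hz1, hzB⟩ := h hyA
  exact le_trans (mu_le_of_one hT hR hz1) (le_sSup (Set.mem_image_of_mem _ hzB))

lemma lowApp_mono (hT : IsTnorm T) (hR : IsFuzzyTEquiv T μ) {A B : Set U}
    (h : lowerE μ A ⊆ lowerE μ B) : lowerApp μ A ≤ lowerApp μ B := by
  intro x
  apply le_sInf
  rintro r ⟨y, hyB, rfl⟩
  have hyLB : y ∉ lowerE μ B := fun hc => hyB (hc (hR.1 y))
  have hyLA : y ∉ lowerE μ A := fun hc => hyLB (h hc)
  obtain ⟨z, hz1, hzA⟩ := Set.not_subset.1 hyLA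
  exact le_trans (sInf_le ⟨z, hzA, rfl⟩) (symm_anti (mu_le_of_one hT hR hz1))

lemma upE_rev (hD : DuallyWellOrdered μ) {A B : Set U}
    (h : upperApp μ A ≤ upperApp μ B) : upperE μ A ⊆ upperE μ B := by
  intro x hx
  obtain ⟨y, hy1, hyA⟩ := hx
  have h1 : upperApp μ B x = 1 := by
    refine le_antisymm unitInterval.le_one' ?_
    calc (1 : I) = μ x y := hy1.symm
      _ ≤ upperApp μ A x := le_sSup ⟨y, hyA, rfl⟩
      _ ≤ _ := h x
  have hne : (μ x '' B).Nonempty := by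
    by_contra hc
    rw [Set.not_nonempty_iff_eq_empty] at hc
    rw [upperApp, hc, sSup_empty] at h1
    exact zero_ne_one h1
  obtain ⟨m, hm, hmax⟩ := hD (μ x '' B) (by rintro r ⟨z, _, rfl⟩; exact ⟨x, z, rfl⟩) hne
  have hle : upperApp μ B x ≤ m := sSup_le hmax
  have hm1 : m = 1 := le_antisymm unitInterval.le_one' (h1 ▸ hle)
  obtain ⟨z, hzB, hz⟩ := hm
  exact ⟨z, hz.trans hm1, hzB⟩

lemma lowE_rev (hD : DuallyWellOrdered μ) {A B : Set U}
    (h : lowerApp μ A ≤ lowerApp μ B) : lowerE μ A ⊆ lowerE μ B := by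
  intro x hx y hy1
  by_contra hyB
  have h0 : lowerApp μ A x = 0 := by
    refine le_antisymm ?_ unitInterval.nonneg'
    calc lowerApp μ A x ≤ lowerApp μ B x := h x
      _ ≤ σ (μ x y) := sInf_le ⟨y, hyB, rfl⟩
      _ = 0 := by rw [hy1, unitInterval.symm_one]
  have hne : (μ x '' Aᶜ).Nonempty := by
    by_contra hc
    rw [Set.not_nonempty_iff_eq_empty, Set.image_eq_empty] at hc
    have h1 : lowerApp μ A x = 1 := by
      rw [lowerApp, hc, Set.image_empty, sInf_empty]; rfl
    rw [h1] at h0; exact one_ne_zero h0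
  obtain ⟨m, hm, hmax⟩ := hD (μ x '' Aᶜ) (by rintro r ⟨z, _, rfl⟩; exact ⟨x, z, rfl⟩) hne
  obtain ⟨z, hzA, hz⟩ := hm
  have hle : lowerApp μ A x = σ m := by
    refine le_antisymm (sInf_le ⟨z, hzA, congrArg σ hz⟩) (le_sInf ?_)
    rintro r ⟨w, hw, rfl⟩
    exact symm_anti (hmax _ ⟨w, hw, rfl⟩)
  have hm1 : m = 1 := by
    have h2 : σ m = 0 := hle ▸ h0
    have h3 := congrArg σ h2
    rwa [unitInterval.symm_symm, unitInterval.symm_zero] at h3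
  exact hzA (hx (hz.trans hm1))

end helpers

/-- the poset of fuzzy rough sets `𝓡𝓢(U,R)` is order-isomorphic
to the poset of crisp rough sets `RS(U,E)`, via `(A_E, A^E) ↦ (μ_[A]_R, μ_[A]^R)`. -/
theorem stmt10 {U : Type*} (T : I → I → I) (μ : U → U → I)
    (hT : IsTnorm T) (hR : IsFuzzyTEquiv T μ) (hD : DuallyWellOrdered μ) :
    ∃ f : {p : Set U × Set U // ∃ A : Set U, p = (lowerE μ A, upperE μ A)} ≃o
          {q : (U → I) × (U → I) // ∃ A : Set U, q = (lowerApp μ A, upperApp μ A)},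
      ∀ A : Set U,
        (f ⟨(lowerE μ A, upperE μ A), A, rfl⟩ : {q : (U → I) × (U → I) //
            ∃ A : Set U, q = (lowerApp μ A, upperApp μ A)}).1 =
          (lowerApp μ A, upperApp μ A) := by
  classical
  have key : ∀ A B : Set U,
      ((lowerE μ A, upperE μ A) : Set U × Set U) ≤ (lowerE μ B, upperE μ B) ↔
      ((lowerApp μ A, upperApp μ A) : (U → I) × (U → I)) ≤ (lowerApp μ B, upperApp μ B) := by
    intro A B
    constructor
    · rintro ⟨h1, h2⟩
      exact ⟨lowApp_mono hT hR h1, upApp_mono hT hR h2⟩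
    · rintro ⟨h1, h2⟩
      exact ⟨lowE_rev hD h1, upE_rev hD h2⟩
  have keyEq : ∀ A B : Set U,
      ((lowerE μ A, upperE μ A) : Set U × Set U) = (lowerE μ B, upperE μ B) ↔
      ((lowerApp μ A, upperApp μ A) : (U → I) × (U → I)) = (lowerApp μ B, upperApp μ B) := by
    intro A B
    constructor
    · intro h
      exact le_antisymm ((key A B).1 h.le) ((key B A).1 h.ge)
    · intro h
      exact le_antisymm ((key A B).2 h.le) ((key B A).2 h.ge)
  let F : {p : Set U × Set U // ∃ A : Set U, p = (lowerE μ A, upperE μ A)} →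
      {q : (U → I) × (U → I) // ∃ A : Set U, q = (lowerApp μ A, upperApp μ A)} :=
    fun p => ⟨(lowerApp μ p.2.choose, upperApp μ p.2.choose), p.2.choose, rfl⟩
  let G : {q : (U → I) × (U → I) // ∃ A : Set U, q = (lowerApp μ A, upperApp μ A)} →
      {p : Set U × Set U // ∃ A : Set U, p = (lowerE μ A, upperE μ A)} :=
    fun q => ⟨(lowerE μ q.2.choose, upperE μ q.2.choose), q.2.choose, rfl⟩
  have hli : Function.LeftInverse G F := by
    intro p
    apply Subtype.ext
    have h1 := p.2.choose_spec
    have h2 : ((lowerApp μ p.2.choose, upperApp μ p.2.choose) : (U → I) × (U → I)) =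
        (lowerApp μ (F p).2.choose, upperApp μ (F p).2.choose) := (F p).2.choose_spec
    have h3 := (keyEq p.2.choose (F p).2.choose).2 h2
    show ((lowerE μ (F p).2.choose, upperE μ (F p).2.choose) : Set U × Set U) = p.1
    rw [h1]
    exact h3.symm
  have hri : Function.RightInverse G F := by
    intro q
    apply Subtype.ext
    have h1 := q.2.choose_spec
    have h2 : ((lowerE μ q.2.choose, upperE μ q.2.choose) : Set U × Set U) =
        (lowerE μ (G q).2.choose, upperE μ (G q).2.choose) := (G q).2.choose_spec
    have h3 := (keyEq q.2.choose (G q).2.choose).1 h2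
    show ((lowerApp μ (G q).2.choose, upperApp μ (G q).2.choose) : (U → I) × (U → I)) = q.1
    rw [h1]
    exact h3.symm
  have hrel : ∀ p q : {p : Set U × Set U // ∃ A : Set U, p = (lowerE μ A, upperE μ A)},
      F p ≤ F q ↔ p ≤ q := by
    intro p q
    constructor
    · intro h
      have h' : ((lowerApp μ p.2.choose, upperApp μ p.2.choose) : (U → I) × (U → I)) ≤
          (lowerApp μ q.2.choose, upperApp μ q.2.choose) := h
      have h2 := (key _ _).2 h'
      show p.1 ≤ q.1
      rw [p.2.choose_spec, q.2.choose_spec]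
      exact h2
    · intro h
      have h' : p.1 ≤ q.1 := h
      rw [p.2.choose_spec, q.2.choose_spec] at h'
      exact (key _ _).1 h'
  refine ⟨⟨⟨F, G, hli, hri⟩, fun {p q} => hrel p q⟩, ?_⟩
  intro A
  have h1 := (⟨((lowerE μ A, upperE μ A) : Set U × Set U), A, rfl⟩ :
      {p : Set U × Set U // ∃ A : Set U, p = (lowerE μ A, upperE μ A)}).2.choose_spec
  exact ((keyEq A _).1 h1).symm
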